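/- Let d ≥ 1 and let S ⊆ ℤ^d be a finite set such that 0 ∉ S and such that m ∈ S implies −m ∉ S. Let a, b : S → ℝ^d be arbitrary, and define f : ℝ^d → ℝ^d by f(x) = Σ_{m ∈ S} (a_m·cos⟨m,x⟩ + b_m·sin⟨m,x⟩), where ⟨m,x⟩ = Σᵢ mᵢxᵢ. Then the real linear span of the set of values {f(x) : x ∈ ℝ^d} equals the real linear span of the set of coefficient vectors {a_m : m ∈ S} ∪ {b_m : m ∈ S}. -/
import Mathlib

open Set

/-- The integer pairing `⟨m, x⟩ = Σᵢ mᵢ xᵢ` of a lattice vector with a point of `ℝ^d`. -/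
def latDot (d : ℕ) (m : Fin d → ℤ) (x : Fin d → ℝ) : ℝ := ∑ i, (m i : ℝ) * x i

private lemma latDot_add (d : ℕ) (m : Fin d → ℤ) (x y : Fin d → ℝ) :
    latDot d m (x + y) = latDot d m x + latDot d m y := by
  simp [latDot, mul_add, Finset.sum_add_distrib]

private lemma latDot_neg (d : ℕ) (m : Fin d → ℤ) (x : Fin d → ℝ) :
    latDot d (-m) x = -latDot d m x := by
  simp [latDot, Finset.sum_neg_distrib]

/-- The character `x ↦ exp(i⟨m,x⟩)` as a monoid hom. -/
private noncomputable def trigChar {d : ℕ} (m : Fin d → ℤ) :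
    Multiplicative (Fin d → ℝ) →* ℂ where
  toFun x := Complex.exp (Complex.I * (latDot d m (Multiplicative.toAdd x) : ℝ))
  map_one' := by simp [latDot]
  map_mul' x y := by
    show Complex.exp (Complex.I * (latDot d m (Multiplicative.toAdd (x * y)) : ℝ))
        = Complex.exp (Complex.I * (latDot d m (Multiplicative.toAdd x) : ℝ))
        * Complex.exp (Complex.I * (latDot d m (Multiplicative.toAdd y) : ℝ))
    rw [← Complex.exp_add, ← mul_add, ← Complex.ofReal_add, ← latDot_add]
    rfl

private lemma trigChar_injective {d : ℕ} : Function.Injective (trigChar (d := d)) := by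
  intro m m' h
  by_contra hne
  obtain ⟨j, hj⟩ : ∃ j, m j ≠ m' j := by
    by_contra hc; push_neg at hc; exact hne (funext hc)
  have hc : ((m j : ℝ) - (m' j : ℝ)) ≠ 0 := by
    rw [sub_ne_zero]; exact_mod_cast hj
  set t : ℝ := Real.pi / ((m j : ℝ) - (m' j : ℝ)) with ht
  set x : Fin d → ℝ := Pi.single j t with hx
  have hdot : ∀ n : Fin d → ℤ, latDot d n x = (n j : ℝ) * t := by
    intro n
    simp [latDot, hx, Pi.single_apply, mul_ite, Finset.sum_ite_eq']
  have hev := DFunLike.congr_fun h (Multiplicative.ofAdd x)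
  simp only [trigChar, MonoidHom.coe_mk, OneHom.coe_mk, toAdd_ofAdd] at hev
  rw [hdot m, hdot m'] at hev
  have h2 : Complex.exp (Complex.I * (((m j : ℝ) * t : ℝ) : ℂ)
      - Complex.I * (((m' j : ℝ) * t : ℝ) : ℂ)) = 1 := by
    rw [Complex.exp_sub, hev, div_self (Complex.exp_ne_zero _)]
  have hπ : ((m j : ℝ) - (m' j : ℝ)) * t = Real.pi := by
    rw [ht]; field_simp
  have h4 : Complex.exp ((Real.pi : ℂ) * Complex.I) = 1 := by
    rw [← h2]; congr 1; rw [← hπ]; push_cast; ring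
  rw [Complex.exp_pi_mul_I] at h4
  norm_num at h4

private lemma key {d : ℕ} (S : Finset (Fin d → ℤ))
    (h0 : (0 : Fin d → ℤ) ∉ S) (hsym : ∀ m ∈ S, -m ∉ S)
    (a b : (Fin d → ℤ) → (Fin d → ℝ)) (φ : (Fin d → ℝ) →ₗ[ℝ] ℝ)
    (hφ : ∀ x : Fin d → ℝ,
      φ (∑ m ∈ S, (Real.cos (latDot d m x) • a m + Real.sin (latDot d m x) • b m)) = 0) :
    ∀ m ∈ S, φ (a m) = 0 ∧ φ (b m) = 0 := by
  classical
  set T : Finset (Fin d → ℤ) := S ∪ S.image (fun n => -n) with hT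
  set g : (Fin d → ℤ) → ℂ := fun m =>
    if m ∈ S then ((φ (a m) : ℂ) - Complex.I * (φ (b m) : ℂ)) / 2
    else ((φ (a (-m)) : ℂ) + Complex.I * (φ (b (-m)) : ℂ)) / 2 with hg
  have hdisj : Disjoint S (S.image (fun n => -n)) := by
    rw [Finset.disjoint_right]
    intro m hm hmS
    obtain ⟨n, hn, rfl⟩ := Finset.mem_image.mp hm
    exact hsym n hn hmS
  have hLI : LinearIndependent ℂ (fun m : Fin d → ℤ => ⇑(trigChar (d := d) m)) :=
    (linearIndependent_monoidHom (Multiplicative (Fin d → ℝ)) ℂ).comp _ trigChar_injective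
  have hsum : ∑ m ∈ T, g m • ⇑(trigChar (d := d) m) = 0 := by
    funext x
    set y : Fin d → ℝ := Multiplicative.toAdd x with hy
    have happ : ∀ n : Fin d → ℤ, trigChar (d := d) n x
        = Complex.exp (Complex.I * (latDot d n y : ℝ)) := fun n => rfl
    have hreal : ∑ n ∈ S, (Real.cos (latDot d n y) * φ (a n)
        + Real.sin (latDot d n y) * φ (b n)) = 0 := by
      have h := hφ y
      simpa [map_sum, map_add, map_smul, smul_eq_mul] using h
    simp only [Finset.sum_apply, Pi.smul_apply, Pi.zero_apply, smul_eq_mul]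
    rw [hT, Finset.sum_union hdisj,
      Finset.sum_image (fun n _ n' _ h => neg_injective h)]
    rw [← Finset.sum_add_distrib]
    have hterm : ∀ n ∈ S, g n * trigChar (d := d) n x
        + g (-n) * trigChar (d := d) (-n) x
        = ((Real.cos (latDot d n y) * φ (a n) + Real.sin (latDot d n y) * φ (b n) : ℝ) : ℂ) := by
      intro n hn
      have hnn : -n ∉ S := hsym n hn
      rw [happ, happ, latDot_neg, hg]
      simp only [hn, if_pos, hnn, if_neg, neg_neg, if_false]
      push_cast
      rw [mul_comm Complex.I ((latDot d n y : ℝ) : ℂ),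
        mul_comm Complex.I (-((latDot d n y : ℝ) : ℂ)), Complex.exp_mul_I, Complex.exp_mul_I,
        Complex.cos_neg, Complex.sin_neg]
      linear_combination (-(Complex.sin ((latDot d n y : ℝ) : ℂ)) * (φ (b n) : ℂ)) * Complex.I_sq
    rw [Finset.sum_congr rfl hterm, ← Complex.ofReal_sum, hreal, Complex.ofReal_zero]
  have hzero : ∀ m ∈ T, g m = 0 := linearIndependent_iff'.mp hLI T g hsum
  intro m hm
  have h1 : g m = 0 := hzero m (Finset.mem_union_left _ hm)
  have h2 : g (-m) = 0 := hzero (-m) (Finset.mem_union_right _ (Finset.mem_image_of_mem _ hm))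
  have hmns : -m ∉ S := hsym m hm
  rw [hg] at h1 h2
  simp only [hm, if_pos] at h1
  simp only [hmns, if_neg, if_false, neg_neg] at h2
  have hA : (φ (a m) : ℂ) = 0 := by linear_combination h1 + h2
  have hB : (φ (b m) : ℂ) = 0 := by
    linear_combination (-Complex.I) * h2 + Complex.I * h1 + (φ (b m) : ℂ) * Complex.I_sq
  exact ⟨by exact_mod_cast hA, by exact_mod_cast hB⟩

/-- The pointwise span of the values of a trigonometric vector polynomial equals
the span of its Fourier coefficient vectors. -/
theorem stmt_12 (d : ℕ) (hd : 1 ≤ d) (S : Finset (Fin d → ℤ))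
    (h0 : (0 : Fin d → ℤ) ∉ S) (hsym : ∀ m ∈ S, -m ∉ S)
    (a b : (Fin d → ℤ) → (Fin d → ℝ)) :
    Submodule.span ℝ
        (Set.range (fun x : Fin d → ℝ =>
          ∑ m ∈ S, (Real.cos (latDot d m x) • a m + Real.sin (latDot d m x) • b m))) =
      Submodule.span ℝ (a '' S ∪ b '' S) := by
  classical
  set f : (Fin d → ℝ) → (Fin d → ℝ) := fun x =>
    ∑ m ∈ S, (Real.cos (latDot d m x) • a m + Real.sin (latDot d m x) • b m) with hf
  set V := Submodule.span ℝ (Set.range f) with hV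
  apply le_antisymm
  · rw [Submodule.span_le]
    rintro _ ⟨x, rfl⟩
    exact Submodule.sum_mem _ fun m hm => Submodule.add_mem _
      (Submodule.smul_mem _ _ (Submodule.subset_span
        (Or.inl (Set.mem_image_of_mem a (Finset.mem_coe.mpr hm)))))
      (Submodule.smul_mem _ _ (Submodule.subset_span
        (Or.inr (Set.mem_image_of_mem b (Finset.mem_coe.mpr hm)))))
  · rw [Submodule.span_le]
    have hval : ∀ x, f x ∈ V := fun x => Submodule.subset_span ⟨x, rfl⟩
    have main : ∀ m ∈ S, a m ∈ V ∧ b m ∈ V := by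
      intro m hm
      have sep : ∀ v : Fin d → ℝ, v ∉ V → ∃ φ : Module.Dual ℝ (Fin d → ℝ),
          φ v ≠ 0 ∧ ∀ x, φ (f x) = 0 := by
        intro v hv
        obtain ⟨φ, hφ1, hφ2⟩ := V.exists_dual_map_eq_bot_of_notMem hv inferInstance
        refine ⟨φ, hφ1, fun x => ?_⟩
        have : φ (f x) ∈ V.map φ := Submodule.mem_map_of_mem (hval x)
        rwa [hφ2, Submodule.mem_bot] at this
      constructor
      · by_contra hmem
        obtain ⟨φ, hφ1, hφ2⟩ := sep _ hmem
        exact hφ1 ((key S h0 hsym a b φ hφ2 m hm).1)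
      · by_contra hmem
        obtain ⟨φ, hφ1, hφ2⟩ := sep _ hmem
        exact hφ1 ((key S h0 hsym a b φ hφ2 m hm).2)
    rintro v (⟨m, hm, rfl⟩ | ⟨m, hm, rfl⟩)
    exacts [(main m hm).1, (main m hm).2]
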